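/- Let T₁, T₂ be random variables with joint density p(t₁, t₂) = 𝟙{0 ≤ t₂ ≤ t₁}·t_{n-1}(t₁)·q(t₂), where t_{n-1} is the density of the Student t-distribution with n-1 degrees of freedom and q is a nonnegative integrable function. Then T := (1 - F_{n-1}(T₁))/(1 - F_{n-1}(T₂)) is uniformly distributed on [0,1], where F_{n-1} is the Student t cumulative distribution function with n-1 degrees of freedom. -/

import Mathlib

open MeasureTheory Real Set
open scoped ENNReal

/-- Density of the Student t-distribution with `ν` degrees of freedom. -/
noncomputable def studentDens (ν x : ℝ) : ℝ :=
  Real.Gamma ((ν + 1) / 2) / (Real.sqrt (ν * Real.pi) * Real.Gamma (ν / 2)) *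
    (1 + x ^ 2 / ν) ^ (-(ν + 1) / 2)

/-- CDF of the Student t-distribution with `ν` degrees of freedom. -/
noncomputable def studentCDF (ν x : ℝ) : ℝ := ∫ t in Set.Iic x, studentDens ν t

lemma real_beta {u v : ℝ} (hu : 0 < u) (hv : 0 < v) :
    ∫ x in (0:ℝ)..1, x ^ (u - 1) * (1 - x) ^ (v - 1) =
      Real.Gamma u * Real.Gamma v / Real.Gamma (u + v) := by
  have h := Complex.Gamma_mul_Gamma_eq_betaIntegral (s := (u:ℂ)) (t := (v:ℂ))
    (by simpa using hu) (by simpa using hv)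
  have hbeta : Complex.betaIntegral (u:ℂ) (v:ℂ)
      = ((∫ x in (0:ℝ)..1, x ^ (u - 1) * (1 - x) ^ (v - 1) : ℝ) : ℂ) := by
    rw [Complex.betaIntegral, ← intervalIntegral.integral_ofReal]
    refine intervalIntegral.integral_congr fun x hx => ?_
    rw [uIcc_of_le zero_le_one] at hx
    have h1 : ((u:ℂ) - 1) = ((u - 1 : ℝ) : ℂ) := by push_cast; ring
    have h2 : ((v:ℂ) - 1) = ((v - 1 : ℝ) : ℂ) := by push_cast; ring
    have h3 : (1 - (x:ℂ)) = ((1 - x : ℝ) : ℂ) := by push_cast; ring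
    rw [h1, h2, h3, ← Complex.ofReal_cpow hx.1, ← Complex.ofReal_cpow (by linarith [hx.2]),
      ← Complex.ofReal_mul]
  rw [hbeta, Complex.Gamma_ofReal, Complex.Gamma_ofReal, ← Complex.ofReal_add,
    Complex.Gamma_ofReal, ← Complex.ofReal_mul, ← Complex.ofReal_mul] at h
  have h' := Complex.ofReal_inj.mp h
  have hG : Real.Gamma (u + v) ≠ 0 := (Real.Gamma_pos_of_pos (by linarith)).ne'
  field_simp [h']
  rw [h']; ring

lemma integrable_one_add_sq_rpow {p : ℝ} (hp : 1 ≤ p) :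
    Integrable (fun y : ℝ => (1 + y ^ 2) ^ (-p)) := by
  have hc : Continuous (fun y : ℝ => (1 + y ^ 2) ^ (-p)) := by
    apply Continuous.rpow_const (by continuity)
    intro x; left; positivity
  refine integrable_inv_one_add_sq.mono hc.aestronglyMeasurable ?_
  refine Filter.Eventually.of_forall fun y => ?_
  have h1 : (0:ℝ) < 1 + y ^ 2 := by positivity
  rw [Real.norm_eq_abs, Real.norm_eq_abs, abs_of_pos (Real.rpow_pos_of_pos h1 _),
    abs_of_pos (by positivity)]
  calc (1 + y ^ 2) ^ (-p) ≤ (1 + y ^ 2) ^ (-1 : ℝ) :=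
        Real.rpow_le_rpow_of_exponent_le (by nlinarith) (by linarith)
    _ = (1 + y ^ 2)⁻¹ := by rw [Real.rpow_neg_one]


lemma integral_one_add_sq_rpow {p : ℝ} (hp : 1 ≤ p) :
    ∫ y : ℝ, (1 + y ^ 2) ^ (-p) = Real.sqrt π * Real.Gamma (p - 1/2) / Real.Gamma p := by
  set φ : ℝ → ℝ := fun u => Real.sqrt (u⁻¹ - 1) with hφ
  set φ' : ℝ → ℝ := fun u => 1 / (2 * Real.sqrt (u⁻¹ - 1)) * (-(u ^ 2)⁻¹) with hφ'
  have hw : ∀ u : ℝ, u ∈ Ioo (0:ℝ) 1 → 0 < u⁻¹ - 1 := by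
    intro u hu
    have := (one_lt_inv₀ hu.1).mpr hu.2
    linarith
  have himg : φ '' Ioo 0 1 = Ioi (0:ℝ) := by
    apply Subset.antisymm
    · rintro y ⟨u, hu, rfl⟩
      exact Real.sqrt_pos.mpr (hw u hu)
    · rintro y hy
      refine ⟨(1 + y ^ 2)⁻¹, ⟨by positivity, ?_⟩, ?_⟩
      · rw [inv_lt_one_iff₀]; right; nlinarith [mem_Ioi.mp hy]
      · have h : ((1 + y ^ 2)⁻¹)⁻¹ - 1 = y ^ 2 := by rw [inv_inv]; ring
        rw [hφ]; simp only [h]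
        exact Real.sqrt_sq (le_of_lt hy)
  have hderiv : ∀ u ∈ Ioo (0:ℝ) 1, HasDerivWithinAt φ (φ' u) (Ioo 0 1) u := by
    intro u hu
    have h1 : HasDerivAt (fun x : ℝ => x⁻¹ - 1) (-(u ^ 2)⁻¹) u :=
      (hasDerivAt_inv hu.1.ne').sub_const 1
    exact ((Real.hasDerivAt_sqrt (hw u hu).ne').comp u h1).hasDerivWithinAt
  have hinj : InjOn φ (Ioo 0 1) := by
    intro a ha b hb h
    have h2 : a⁻¹ - 1 = b⁻¹ - 1 := (Real.sqrt_inj (hw a ha).le (hw b hb).le).mp h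
    have : a⁻¹ = b⁻¹ := by linarith
    exact inv_injective this
  have hchg := integral_image_eq_integral_abs_deriv_smul measurableSet_Ioo hderiv hinj
    (fun y => (1 + y ^ 2) ^ (-p))
  rw [himg] at hchg
  have hpt : ∀ u ∈ Ioo (0:ℝ) 1, |φ' u| • (1 + φ u ^ 2) ^ (-p)
      = 2⁻¹ * (u ^ (p - 1/2 - 1) * (1 - u) ^ ((1:ℝ)/2 - 1)) := by
    intro u hu
    have hu0 : (0:ℝ) < u := hu.1
    have h1u : (0:ℝ) < 1 - u := by linarith [hu.2]
    have hwu := hw u hu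
    have hsq : Real.sqrt (u⁻¹ - 1) = (1 - u) ^ ((1:ℝ)/2) / u ^ ((1:ℝ)/2) := by
      rw [← Real.sqrt_eq_rpow, ← Real.sqrt_eq_rpow, ← Real.sqrt_div h1u.le]
      congr 1
      field_simp
    have e1 : (1 + φ u ^ 2) = u⁻¹ := by
      rw [hφ]; simp only []
      rw [Real.sq_sqrt hwu.le]; ring
    have e2 : (u⁻¹ : ℝ) ^ (-p) = u ^ p := by
      rw [Real.inv_rpow hu0.le, ← Real.rpow_neg hu0.le, neg_neg]
    have habs : |φ' u| = 1 / (2 * Real.sqrt (u⁻¹ - 1)) * (u ^ 2)⁻¹ := by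
      rw [hφ']; simp only []
      rw [abs_mul, abs_neg, abs_of_pos (by positivity), abs_of_pos (by positivity)]
    rw [smul_eq_mul, habs, e1, e2, hsq]
    have hu12 : (u ^ ((1:ℝ)/2)) ^ 2 = u := by
      rw [sq, ← Real.rpow_add hu0]; norm_num
    have h1u12 : ((1-u) ^ ((1:ℝ)/2)) ^ 2 = 1 - u := by
      rw [sq, ← Real.rpow_add h1u]; norm_num
    have hup : (0:ℝ) < u ^ ((1:ℝ)/2) := Real.rpow_pos_of_pos hu0 _
    have h1up : (0:ℝ) < (1-u) ^ ((1:ℝ)/2) := Real.rpow_pos_of_pos h1u _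
    rw [Real.rpow_sub hu0, Real.rpow_sub hu0, Real.rpow_sub h1u, Real.rpow_one, Real.rpow_one]
    field_simp
    ring_nf
    rw [hu12, h1u12]
    ring
  have hIoo : ∫ x in Ioo (0:ℝ) 1, |φ' x| • (1 + φ x ^ 2) ^ (-p)
      = 2⁻¹ * ∫ u in (0:ℝ)..1, u ^ (p - 1/2 - 1) * (1 - u) ^ ((1:ℝ)/2 - 1) := by
    rw [setIntegral_congr_fun measurableSet_Ioo hpt, MeasureTheory.integral_const_mul,
      intervalIntegral.integral_of_le zero_le_one, ← integral_Ioc_eq_integral_Ioo]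
  have hbeta := real_beta (u := p - 1/2) (v := 1/2) (by linarith) (by norm_num)
  have heven : ∫ y : ℝ, (1 + y ^ 2) ^ (-p) = 2 * ∫ y in Ioi (0:ℝ), (1 + y ^ 2) ^ (-p) := by
    calc ∫ y : ℝ, (1 + y ^ 2) ^ (-p) = ∫ y : ℝ, (1 + |y| ^ 2) ^ (-p) := by simp [sq_abs]
      _ = 2 * ∫ y in Ioi (0:ℝ), (1 + y ^ 2) ^ (-p) :=
        integral_comp_abs (f := fun y => (1 + y ^ 2) ^ (-p))
  rw [heven, hchg, hIoo, hbeta]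
  rw [Real.Gamma_one_half_eq]
  have : p - 1/2 + 1/2 = p := by ring
  rw [this]
  ring

lemma studentDens_pos {ν : ℝ} (hν : 0 < ν) (x : ℝ) : 0 < studentDens ν x := by
  unfold studentDens
  have h1 : (0:ℝ) < 1 + x ^ 2 / ν := by positivity
  have hg1 := Real.Gamma_pos_of_pos (show (0:ℝ) < (ν + 1) / 2 by linarith)
  have hg2 := Real.Gamma_pos_of_pos (show (0:ℝ) < ν / 2 by linarith)
  have hs : (0:ℝ) < Real.sqrt (ν * π) := Real.sqrt_pos.mpr (by positivity)
  exact mul_pos (div_pos hg1 (mul_pos hs hg2)) (Real.rpow_pos_of_pos h1 _)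

lemma studentDens_continuous {ν : ℝ} (hν : 0 < ν) : Continuous (studentDens ν) := by
  unfold studentDens
  refine continuous_const.mul (Continuous.rpow_const (by continuity) fun x => Or.inl ?_)
  positivity

lemma studentDens_comp {ν : ℝ} (hν : 0 < ν) (x : ℝ) :
    studentDens ν x = Real.Gamma ((ν + 1) / 2) / (Real.sqrt (ν * π) * Real.Gamma (ν / 2)) *
      (1 + (x / Real.sqrt ν) ^ 2) ^ (-((ν + 1) / 2)) := by
  unfold studentDens
  have h : (x / Real.sqrt ν) ^ 2 = x ^ 2 / ν := by
    rw [div_pow, Real.sq_sqrt hν.le]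
  rw [h, neg_div]

lemma studentDens_integrable {ν : ℝ} (hν : 1 ≤ ν) : Integrable (studentDens ν) := by
  have hν0 : (0:ℝ) < ν := by linarith
  have hp : 1 ≤ (ν + 1) / 2 := by linarith
  have hs : Real.sqrt ν ≠ 0 := (Real.sqrt_pos.mpr hν0).ne'
  have h1 : Integrable (fun x : ℝ => (1 + (x * (Real.sqrt ν)⁻¹) ^ 2) ^ (-((ν + 1) / 2))) :=
    (integrable_comp_mul_right_iff _ (inv_ne_zero hs)).mpr (integrable_one_add_sq_rpow hp)
  have := h1.const_mul (Real.Gamma ((ν + 1) / 2) / (Real.sqrt (ν * π) * Real.Gamma (ν / 2)))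
  refine this.congr (Filter.Eventually.of_forall fun x => ?_)
  rw [studentDens_comp hν0, div_eq_mul_inv x]

lemma studentDens_integral {ν : ℝ} (hν : 1 ≤ ν) : ∫ x, studentDens ν x = 1 := by
  have hν0 : (0:ℝ) < ν := by linarith
  have hp : 1 ≤ (ν + 1) / 2 := by linarith
  have hs0 : (0:ℝ) < Real.sqrt ν := Real.sqrt_pos.mpr hν0
  have h1 : ∫ x, studentDens ν x = Real.Gamma ((ν + 1) / 2) / (Real.sqrt (ν * π) *
      Real.Gamma (ν / 2)) * ∫ x : ℝ, (1 + (x / Real.sqrt ν) ^ 2) ^ (-((ν + 1) / 2)) := by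
    rw [← MeasureTheory.integral_const_mul]
    exact integral_congr_ae (Filter.Eventually.of_forall fun x => studentDens_comp hν0 x)
  rw [h1, Measure.integral_comp_div (fun y : ℝ => (1 + y ^ 2) ^ (-((ν + 1) / 2))) (Real.sqrt ν),
    integral_one_add_sq_rpow hp, abs_of_pos hs0]
  have he : (ν + 1) / 2 - 1 / 2 = ν / 2 := by ring
  rw [smul_eq_mul, he, Real.sqrt_mul hν0.le]
  have hg1 := Real.Gamma_pos_of_pos (show (0:ℝ) < (ν + 1) / 2 by linarith)
  have hg2 := Real.Gamma_pos_of_pos (show (0:ℝ) < ν / 2 by linarith)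
  have hπ : (0:ℝ) < Real.sqrt π := Real.sqrt_pos.mpr Real.pi_pos
  field_simp

section CDF
variable {ν : ℝ} (hν : 1 ≤ ν)
include hν


/-- survival function as integral over Ici -/
lemma studentSurv_eq (c : ℝ) :
    1 - studentCDF ν c = ∫ x in Ici c, studentDens ν x := by
  have hi := studentDens_integrable hν
  have h := intervalIntegral.integral_Iic_add_Ioi (b := c) (f := studentDens ν)
    hi.integrableOn hi.integrableOn
  rw [studentDens_integral hν] at h
  rw [integral_Ici_eq_integral_Ioi, studentCDF]
  linarith

lemma studentSurv_pos (c : ℝ) : 0 < 1 - studentCDF ν c := by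
  rw [studentSurv_eq hν]
  have hi := (studentDens_integrable hν).integrableOn (s := Ici c)
  rw [setIntegral_pos_iff_support_of_nonneg_ae
    (Filter.Eventually.of_forall fun x => (studentDens_pos (by linarith : (0:ℝ) < ν) x).le) hi]
  have hsupp : Function.support (studentDens ν) = univ :=
    eq_univ_of_forall fun x => (studentDens_pos (by linarith : (0:ℝ) < ν) x).ne'
  rw [hsupp, univ_inter, Real.volume_Ici]
  exact ENNReal.zero_lt_top


lemma studentCDF_strictMono : StrictMono (studentCDF ν) := by
  intro a b hab
  have hi := studentDens_integrable hν
  have h := intervalIntegral.integral_Iic_sub_Iic (f := studentDens ν) (μ := volume)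
    (a := a) (b := b) hi.integrableOn hi.integrableOn
  have hpos : 0 < ∫ x in a..b, studentDens ν x :=
    intervalIntegral.intervalIntegral_pos_of_pos (hi.intervalIntegrable)
      (studentDens_pos (by linarith : (0:ℝ) < ν)) hab
  have : studentCDF ν b - studentCDF ν a = ∫ x in a..b, studentDens ν x := h
  linarith

lemma studentCDF_continuous : Continuous (studentCDF ν) := by
  have hi := studentDens_integrable hν
  have heq : ∀ x : ℝ, studentCDF ν x
      = studentCDF ν 0 + ∫ t in (0:ℝ)..x, studentDens ν t := by
    intro x
    have h := intervalIntegral.integral_Iic_sub_Iic (f := studentDens ν) (μ := volume)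
      (a := 0) (b := x) hi.integrableOn hi.integrableOn
    have : studentCDF ν x - studentCDF ν 0 = ∫ t in (0:ℝ)..x, studentDens ν t := h
    linarith
  have hc : Continuous fun x => studentCDF ν 0 + ∫ t in (0:ℝ)..x, studentDens ν t :=
    continuous_const.add (intervalIntegral.continuous_primitive
      (fun a b => hi.intervalIntegrable) 0)
  exact hc.congr fun x => (heq x).symm

lemma studentSurv_tendsto : Filter.Tendsto (fun x => 1 - studentCDF ν x)
    Filter.atTop (nhds 0) := by
  have hi := studentDens_integrable hν
  have key : Filter.Tendsto (fun c => ∫ x in Ici c, studentDens ν x)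
      Filter.atTop (nhds 0) := by
    have := MeasureTheory.tendsto_integral_filter_of_dominated_convergence
      (μ := volume) (l := Filter.atTop) (F := fun c => (Ici c).indicator (studentDens ν))
      (f := fun _ => 0) (bound := fun x => |studentDens ν x|)
      (Filter.Eventually.of_forall fun c =>
        ((studentDens_continuous (by linarith : (0:ℝ) < ν)).aestronglyMeasurable).indicator measurableSet_Ici)
      (Filter.Eventually.of_forall fun c => Filter.Eventually.of_forall fun x => ?_)
      hi.abs ?_
    · have h0 : (∫ x : ℝ, (0:ℝ)) = 0 := integral_zero ℝ ℝ
      rw [h0] at this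
      refine Filter.Tendsto.congr (fun c => ?_) this
      rw [integral_indicator measurableSet_Ici]
    · by_cases h : x ∈ Ici c <;> simp [indicator_apply, h, abs_nonneg]
    · refine Filter.Eventually.of_forall fun x => ?_
      have : ∀ᶠ c in Filter.atTop, (Ici c).indicator (studentDens ν) x = 0 := by
        filter_upwards [Filter.eventually_gt_atTop x] with c hc
        simp [indicator_apply, not_le.mpr hc, lt_iff_not_ge.mp hc]
      exact Filter.Tendsto.congr' (Filter.EventuallyEq.symm this) tendsto_const_nhds
  refine Filter.Tendsto.congr (fun c => ?_) key
  exact (studentSurv_eq hν c).symm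

lemma studentSurv_exists (t2 y : ℝ) (hy : 0 < y) (hy2 : y ≤ 1 - studentCDF ν t2) :
    ∃ c, t2 ≤ c ∧ 1 - studentCDF ν c = y := by
  have hG : Continuous fun x => 1 - studentCDF ν x :=
    continuous_const.sub (studentCDF_continuous hν)
  obtain ⟨b, hb1, hb2⟩ := ((studentSurv_tendsto hν).eventually_lt_const hy).and
    (Filter.eventually_ge_atTop t2) |>.exists
  have hsub := intermediate_value_Icc' hb2 (hG.continuousOn (s := Icc t2 b))
  have hy' : y ∈ Icc (1 - studentCDF ν b) (1 - studentCDF ν t2) := ⟨hb1.le, hy2⟩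
  obtain ⟨c, hc, hcy⟩ := hsub hy'
  exact ⟨c, hc.1, hcy⟩

end CDF

lemma lint_Ici {ν : ℝ} (hν : 1 ≤ ν) (c : ℝ) :
    ∫⁻ t in Ici c, ENNReal.ofReal (studentDens ν t) = ENNReal.ofReal (1 - studentCDF ν c) := by
  rw [← ofReal_integral_eq_lintegral_ofReal ((studentDens_integrable hν).integrableOn)
    (Filter.Eventually.of_forall fun x => (studentDens_pos (by linarith) x).le),
    ← studentSurv_eq hν c]

lemma measurableSet_R : MeasurableSet {z : ℝ × ℝ | 0 ≤ z.2 ∧ z.2 ≤ z.1} := by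
  have : {z : ℝ × ℝ | 0 ≤ z.2 ∧ z.2 ≤ z.1}
      = {z : ℝ × ℝ | 0 ≤ z.2} ∩ {z : ℝ × ℝ | z.2 ≤ z.1} := rfl
  rw [this]
  exact (measurableSet_le measurable_const measurable_snd).inter
    (measurableSet_le measurable_snd measurable_fst)

lemma rho_apply {ν : ℝ} (q : ℝ → ℝ) {S : Set (ℝ × ℝ)} (hS : MeasurableSet S) :
    ((volume : Measure (ℝ × ℝ)).withDensity (fun z => ENNReal.ofReal
      (Set.indicator {z : ℝ × ℝ | 0 ≤ z.2 ∧ z.2 ≤ z.1}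
        (fun z => studentDens ν z.1 * q z.2) z))) S
    = ∫⁻ z : ℝ × ℝ, (Set.indicator (S ∩ {z : ℝ × ℝ | 0 ≤ z.2 ∧ z.2 ≤ z.1})
        (fun z => ENNReal.ofReal (studentDens ν z.1 * q z.2))) z := by
  rw [withDensity_apply _ hS]
  have h1 : ∀ z : ℝ × ℝ, ENNReal.ofReal
      (Set.indicator {z : ℝ × ℝ | 0 ≤ z.2 ∧ z.2 ≤ z.1}
        (fun z => studentDens ν z.1 * q z.2) z)
      = Set.indicator {z : ℝ × ℝ | 0 ≤ z.2 ∧ z.2 ≤ z.1}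
        (fun z => ENNReal.ofReal (studentDens ν z.1 * q z.2)) z := by
    intro z
    by_cases hz : z ∈ {z : ℝ × ℝ | 0 ≤ z.2 ∧ z.2 ≤ z.1} <;> simp [hz]
  rw [lintegral_congr h1, ← lintegral_indicator hS, indicator_indicator]

lemma key_measure {ν : ℝ} (hν : 1 ≤ ν) (q : ℝ → ℝ) (hqm : Measurable q)
    (hq0 : ∀ x, 0 ≤ q x) {a : ℝ} (ha : 0 ≤ a) :
    ((volume : Measure (ℝ × ℝ)).withDensity (fun z => ENNReal.ofReal
      (Set.indicator {z : ℝ × ℝ | 0 ≤ z.2 ∧ z.2 ≤ z.1}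
        (fun z => studentDens ν z.1 * q z.2) z)))
      ((fun z : ℝ × ℝ => (1 - studentCDF ν z.1) / (1 - studentCDF ν z.2)) ⁻¹' Iic a)
    = ENNReal.ofReal (min a 1) *
        ∫⁻ t2 in Ici (0:ℝ), ENNReal.ofReal (q t2) * ENNReal.ofReal (1 - studentCDF ν t2) := by
  have hν0 : (0:ℝ) < ν := by linarith
  set G : ℝ → ℝ := fun x => 1 - studentCDF ν x with hGdef
  have hGpos : ∀ x, 0 < G x := studentSurv_pos hν
  have hGanti : ∀ x y : ℝ, x ≤ y → G y ≤ G x := by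
    intro x y h
    simp only [hGdef, sub_le_sub_iff_left]
    exact (studentCDF_strictMono hν).monotone h
  have hGlt : ∀ c t1 : ℝ, G t1 ≤ G c → c ≤ t1 := by
    intro c t1 h
    by_contra hlt
    push_neg at hlt
    have := (studentCDF_strictMono hν) hlt
    simp only [hGdef] at h
    linarith
  have hGcont : Continuous G := continuous_const.sub (studentCDF_continuous hν)
  have hgc : Continuous fun z : ℝ × ℝ => G z.1 / G z.2 :=
    Continuous.div (hGcont.comp continuous_fst) (hGcont.comp continuous_snd)
      fun z => (hGpos z.2).ne'
  have hS : MeasurableSet ((fun z : ℝ × ℝ => G z.1 / G z.2) ⁻¹' Iic a) :=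
    hgc.measurable measurableSet_Iic
  rw [rho_apply q hS]
  set D : ℝ × ℝ → ℝ≥0∞ := fun z => ENNReal.ofReal (studentDens ν z.1 * q z.2) with hDdef
  have hDmeas : Measurable D :=
    ((((studentDens_continuous hν0).measurable).comp measurable_fst).mul
      (hqm.comp measurable_snd)).ennreal_ofReal
  set SR := ((fun z : ℝ × ℝ => G z.1 / G z.2) ⁻¹' Iic a)
    ∩ {z : ℝ × ℝ | 0 ≤ z.2 ∧ z.2 ≤ z.1} with hSRdef
  have hSRmeas : MeasurableSet SR := hS.inter measurableSet_R
  rw [Measure.volume_eq_prod, lintegral_prod_symm _ (hDmeas.indicator hSRmeas).aemeasurable]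
  -- inner integral computation
  have hinner : ∀ t2 : ℝ, (∫⁻ t1, (SR.indicator D) (t1, t2))
      = (Ici (0:ℝ)).indicator
        (fun t2 => ENNReal.ofReal (q t2) * ENNReal.ofReal (min a 1 * G t2)) t2 := by
    intro t2
    by_cases ht2 : 0 ≤ t2
    · rw [indicator_of_mem (show t2 ∈ Ici (0:ℝ) from ht2)]
      by_cases ha0 : 0 < a
      · -- find c
        have hmin0 : 0 < min a 1 := lt_min ha0 one_pos
        obtain ⟨c, hc1, hc2⟩ := studentSurv_exists hν t2 (min a 1 * G t2)
          (mul_pos hmin0 (hGpos t2))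
          (show (a ⊓ 1) * G t2 ≤ G t2 from by nlinarith [hGpos t2, min_le_right a 1])
        have hc2' : G c = (a ⊓ 1) * G t2 := hc2
        have hsect : ∀ t1 : ℝ, (t1, t2) ∈ SR ↔ t1 ∈ Ici c := by
          intro t1
          simp only [hSRdef, mem_inter_iff, mem_preimage, mem_Iic, mem_setOf_eq, mem_Ici]
          constructor
          · rintro ⟨hdiv, -, hle⟩
            have h1 : G t1 ≤ a * G t2 := (div_le_iff₀ (hGpos t2)).mp hdiv
            have h2 : G t1 ≤ G t2 := hGanti _ _ hle
            have h3 : G t1 ≤ min a 1 * G t2 := by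
              rcases min_cases a 1 with ⟨hm, _⟩ | ⟨hm, _⟩ <;> rw [hm] <;> [exact h1; linarith]
            exact hGlt c t1 (by rw [hc2']; exact h3)
          · intro hct1
            have h1 : G t1 ≤ G c := hGanti _ _ hct1
            have h2 : G c ≤ a * G t2 := by
              rw [hc2']
              exact mul_le_mul_of_nonneg_right (min_le_left a 1) (hGpos t2).le
            refine ⟨(div_le_iff₀ (hGpos t2)).mpr (le_trans h1 h2), ht2, le_trans hc1 hct1⟩
        have hrw : ∀ t1 : ℝ, (SR.indicator D) (t1, t2)
            = (Ici c).indicator (fun t1 => ENNReal.ofReal (q t2) *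
                ENNReal.ofReal (studentDens ν t1)) t1 := by
          intro t1
          by_cases h : t1 ∈ Ici c
          · rw [indicator_of_mem ((hsect t1).mpr h), indicator_of_mem h, hDdef]
            simp only []
            rw [mul_comm (studentDens ν t1), ENNReal.ofReal_mul (hq0 t2)]
          · rw [indicator_of_notMem (fun hc' => h ((hsect t1).mp hc')),
              indicator_of_notMem h]
        rw [lintegral_congr hrw, lintegral_indicator measurableSet_Ici,
          lintegral_const_mul' _ _ ENNReal.ofReal_ne_top, lint_Ici hν c, hc2]
      · -- a = 0
        have ha' : a = 0 := le_antisymm (not_lt.mp ha0) ha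
        have hempty : ∀ t1 : ℝ, (t1, t2) ∉ SR := by
          intro t1 h
          obtain ⟨hdiv, -, -⟩ := h
          rw [mem_preimage, mem_Iic, ha'] at hdiv
          exact absurd hdiv (not_le.mpr (div_pos (hGpos t1) (hGpos t2)))
        have : ∀ t1 : ℝ, (SR.indicator D) (t1, t2) = 0 :=
          fun t1 => indicator_of_notMem (hempty t1) D
        rw [lintegral_congr this, lintegral_zero, ha']
        simp
    · rw [indicator_of_notMem (show t2 ∉ Ici (0:ℝ) from ht2)]
      have hempty : ∀ t1 : ℝ, (t1, t2) ∉ SR := by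
        intro t1 h
        exact ht2 h.2.1
      have : ∀ t1 : ℝ, (SR.indicator D) (t1, t2) = 0 :=
        fun t1 => indicator_of_notMem (hempty t1) D
      rw [lintegral_congr this, lintegral_zero]
  rw [lintegral_congr hinner, lintegral_indicator measurableSet_Ici]
  have hfin : ∀ t2 : ℝ, ENNReal.ofReal (q t2) * ENNReal.ofReal (min a 1 * G t2)
      = ENNReal.ofReal (min a 1) * (ENNReal.ofReal (q t2) * ENNReal.ofReal (G t2)) := by
    intro t2
    rw [ENNReal.ofReal_mul (le_min ha zero_le_one)]
    ring
  rw [lintegral_congr fun t2 => hfin t2, lintegral_const_mul' _ _ ENNReal.ofReal_ne_top]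

/-- Null distribution of the t-spacing statistic: if `(T₁, T₂)` has joint density
`𝟙{0 ≤ t₂ ≤ t₁}·t_{n-1}(t₁)·q(t₂)` with `q` nonnegative integrable, then
`T = (1 - F_{n-1}(T₁))/(1 - F_{n-1}(T₂))` is uniform on `[0,1]`. -/
theorem t_spacing_null_uniform {n : ℕ} (hn : 2 ≤ n) {Ω : Type*} [MeasurableSpace Ω]
    (P : Measure Ω) [IsProbabilityMeasure P]
    (T1 T2 : Ω → ℝ) (hmeas1 : Measurable T1) (hmeas2 : Measurable T2)
    (q : ℝ → ℝ) (hq_nonneg : ∀ x, 0 ≤ q x) (hq_int : MeasureTheory.Integrable q)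
    (hjoint : P.map (fun ω => (T1 ω, T2 ω)) =
      (volume : Measure (ℝ × ℝ)).withDensity
        (fun z => ENNReal.ofReal
          (Set.indicator {z : ℝ × ℝ | 0 ≤ z.2 ∧ z.2 ≤ z.1}
            (fun z => studentDens ((n : ℝ) - 1) z.1 * q z.2) z))) :
    P.map (fun ω => (1 - studentCDF ((n : ℝ) - 1) (T1 ω)) / (1 - studentCDF ((n : ℝ) - 1) (T2 ω)))
      = (volume : Measure ℝ).restrict (Set.Icc 0 1) := by
  have hν : 1 ≤ (n : ℝ) - 1 := by
    have : (2:ℝ) ≤ (n:ℝ) := by exact_mod_cast hn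
    linarith
  set ν : ℝ := (n : ℝ) - 1 with hνdef
  have hν0 : (0:ℝ) < ν := by linarith
  -- measurable nonneg version of q
  have hqae : AEMeasurable q (volume : Measure ℝ) := hq_int.aemeasurable
  set q1 : ℝ → ℝ := fun x => max (hqae.mk q x) 0 with hq1def
  have hq1meas : Measurable q1 := hqae.measurable_mk.max measurable_const
  have hq1nonneg : ∀ x, 0 ≤ q1 x := fun x => le_max_right _ _
  have hqq1 : q =ᵐ[(volume : Measure ℝ)] q1 := by
    filter_upwards [hqae.ae_eq_mk] with x hx
    rw [hq1def]
    simp only []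
    rw [← hx, max_eq_left (hq_nonneg x)]
  -- density a.e. equality
  have hsnd : (fun z : ℝ × ℝ => q z.2) =ᵐ[(volume : Measure (ℝ × ℝ))]
      (fun z : ℝ × ℝ => q1 z.2) := by
    rw [Measure.volume_eq_prod]
    exact Measure.QuasiMeasurePreserving.ae_eq_comp Measure.quasiMeasurePreserving_snd hqq1
  have hdens : (volume : Measure (ℝ × ℝ)).withDensity
        (fun z => ENNReal.ofReal
          (Set.indicator {z : ℝ × ℝ | 0 ≤ z.2 ∧ z.2 ≤ z.1}
            (fun z => studentDens ν z.1 * q z.2) z))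
      = (volume : Measure (ℝ × ℝ)).withDensity
        (fun z => ENNReal.ofReal
          (Set.indicator {z : ℝ × ℝ | 0 ≤ z.2 ∧ z.2 ≤ z.1}
            (fun z => studentDens ν z.1 * q1 z.2) z)) := by
    apply withDensity_congr_ae
    filter_upwards [hsnd] with z hz
    by_cases hzR : z ∈ {z : ℝ × ℝ | 0 ≤ z.2 ∧ z.2 ≤ z.1} <;>
      simp [indicator_apply, hzR, hz]
  -- the statistic
  set G : ℝ → ℝ := fun x => 1 - studentCDF ν x with hGdef
  have hGpos : ∀ x, 0 < G x := studentSurv_pos hν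
  have hGcont : Continuous G := continuous_const.sub (studentCDF_continuous hν)
  set g : ℝ × ℝ → ℝ := fun z => G z.1 / G z.2 with hgdef
  have hgc : Continuous g :=
    Continuous.div (hGcont.comp continuous_fst) (hGcont.comp continuous_snd)
      fun z => (hGpos z.2).ne'
  have hg : Measurable g := hgc.measurable
  have hpair : Measurable fun ω => (T1 ω, T2 ω) := hmeas1.prodMk hmeas2
  have hmapeq : P.map (fun ω => (1 - studentCDF ν (T1 ω)) / (1 - studentCDF ν (T2 ω)))
      = ((volume : Measure (ℝ × ℝ)).withDensity
        (fun z => ENNReal.ofReal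
          (Set.indicator {z : ℝ × ℝ | 0 ≤ z.2 ∧ z.2 ≤ z.1}
            (fun z => studentDens ν z.1 * q1 z.2) z))).map g := by
    rw [show (fun ω => (1 - studentCDF ν (T1 ω)) / (1 - studentCDF ν (T2 ω)))
        = g ∘ (fun ω => (T1 ω, T2 ω)) from rfl,
      ← Measure.map_map hg hpair, hjoint, hdens]
  rw [hmapeq]
  -- probability measure
  have hprob : IsProbabilityMeasure ((volume : Measure (ℝ × ℝ)).withDensity
      (fun z => ENNReal.ofReal
        (Set.indicator {z : ℝ × ℝ | 0 ≤ z.2 ∧ z.2 ≤ z.1}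
          (fun z => studentDens ν z.1 * q1 z.2) z))) := by
    rw [← hdens, ← hjoint]
    exact Measure.isProbabilityMeasure_map hpair.aemeasurable
  haveI := hprob
  haveI : IsProbabilityMeasure (((volume : Measure (ℝ × ℝ)).withDensity
      (fun z => ENNReal.ofReal
        (Set.indicator {z : ℝ × ℝ | 0 ≤ z.2 ∧ z.2 ≤ z.1}
          (fun z => studentDens ν z.1 * q1 z.2) z))).map g) :=
    Measure.isProbabilityMeasure_map hg.aemeasurable
  -- total mass identity
  set M := ∫⁻ t2 in Ici (0:ℝ), ENNReal.ofReal (q1 t2) * ENNReal.ofReal (1 - studentCDF ν t2)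
    with hMdef
  have hS1 : MeasurableSet (g ⁻¹' Iic (1:ℝ)) := hg measurableSet_Iic
  have hkey : ∀ a : ℝ, 0 ≤ a →
      ((volume : Measure (ℝ × ℝ)).withDensity
        (fun z => ENNReal.ofReal
          (Set.indicator {z : ℝ × ℝ | 0 ≤ z.2 ∧ z.2 ≤ z.1}
            (fun z => studentDens ν z.1 * q1 z.2) z))) (g ⁻¹' Iic a)
      = ENNReal.ofReal (min a 1) * M :=
    fun a ha => key_measure hν q1 hq1meas hq1nonneg ha
  have hM : M = 1 := by
    have h1 := hkey 1 zero_le_one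
    have hcompl : ((volume : Measure (ℝ × ℝ)).withDensity
        (fun z => ENNReal.ofReal
          (Set.indicator {z : ℝ × ℝ | 0 ≤ z.2 ∧ z.2 ≤ z.1}
            (fun z => studentDens ν z.1 * q1 z.2) z))) ((g ⁻¹' Iic (1:ℝ))ᶜ) = 0 := by
      rw [rho_apply q1 hS1.compl]
      have hempty : ((g ⁻¹' Iic (1:ℝ))ᶜ ∩ {z : ℝ × ℝ | 0 ≤ z.2 ∧ z.2 ≤ z.1}) = ∅ := by
        ext z
        simp only [mem_empty_iff_false, iff_false]
        rintro ⟨hc, h0, hle⟩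
        apply hc
        show g z ≤ 1
        rw [hgdef]
        have : G z.1 ≤ G z.2 := by
          simp only [hGdef, sub_le_sub_iff_left]
          exact (studentCDF_strictMono hν).monotone hle
        exact div_le_one_of_le₀ this (hGpos z.2).le
      rw [hempty]
      simp
    have htot := measure_add_measure_compl (μ := ((volume : Measure (ℝ × ℝ)).withDensity
        (fun z => ENNReal.ofReal
          (Set.indicator {z : ℝ × ℝ | 0 ≤ z.2 ∧ z.2 ≤ z.1}
            (fun z => studentDens ν z.1 * q1 z.2) z)))) hS1
    rw [hcompl, add_zero, h1, measure_univ, min_self, ENNReal.ofReal_one, one_mul] at htot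
    exact htot
  -- extensionality
  apply Measure.ext_of_Iic
  intro a
  rw [Measure.map_apply hg measurableSet_Iic, Measure.restrict_apply' measurableSet_Icc]
  by_cases ha : 0 ≤ a
  · rw [hkey a ha, hM, mul_one]
    have hset : Iic a ∩ Icc (0:ℝ) 1 = Icc 0 (min a 1) := by
      ext x
      simp only [mem_inter_iff, mem_Iic, mem_Icc, le_min_iff]
      tauto
    rw [hset, Real.volume_Icc, sub_zero]
  · push_neg at ha
    have h0 := hkey 0 le_rfl
    rw [min_eq_left zero_le_one] at h0
    have hle : ((volume : Measure (ℝ × ℝ)).withDensity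
        (fun z => ENNReal.ofReal
          (Set.indicator {z : ℝ × ℝ | 0 ≤ z.2 ∧ z.2 ≤ z.1}
            (fun z => studentDens ν z.1 * q1 z.2) z))) (g ⁻¹' Iic a) = 0 := by
      have hmono : (g ⁻¹' Iic a) ⊆ (g ⁻¹' Iic 0) :=
        preimage_mono (Iic_subset_Iic.mpr ha.le)
      refine le_antisymm ?_ zero_le
      calc _ ≤ _ := measure_mono hmono
        _ = 0 := by rw [h0]; simp
    rw [hle]
    have hset : Iic a ∩ Icc (0:ℝ) 1 = ∅ := by
      ext x
      simp only [mem_empty_iff_false, iff_false]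
      rintro ⟨hxa, hx0, -⟩
      have : x ≤ a := hxa
      linarith
    rw [hset]
    simp
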